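/- For every integrable random variable X on an atomless probability space and every real t, E[min(X, t)] = min over α ∈ [0,1] of { α·ES⁻_α(X) + (1 − α)·t }, the minimum is attained, and the set of minimizers is exactly [ℙ(X < t), ℙ(X ≤ t)]. -/

import Mathlib

open MeasureTheory Set

/-- An atomless measure: every set of nonzero measure can be split nontrivially. -/
def Atomless {Ω : Type*} [MeasurableSpace Ω] (μ : Measure Ω) : Prop :=
  ∀ A : Set Ω, MeasurableSet A → μ A ≠ 0 →
    ∃ B ⊆ A, MeasurableSet B ∧ μ B ≠ 0 ∧ μ B ≠ μ A

/-- Left quantile (lower Value-at-Risk) of `X` at level `β`. -/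
noncomputable def VaR {Ω : Type*} [MeasurableSpace Ω] (μ : Measure Ω) (X : Ω → ℝ) (β : ℝ) : ℝ :=
  sInf {t : ℝ | ENNReal.ofReal β ≤ μ {ω | X ω ≤ t}}

/-- Left Expected Shortfall of `X` at level `α ∈ (0,1]`; the value at `α = 0` is junk, but it
is only ever used multiplied by `α = 0`, implementing the convention `0 · x = 0`. -/
noncomputable def ESminus {Ω : Type*} [MeasurableSpace Ω] (μ : Measure Ω) (X : Ω → ℝ)
    (α : ℝ) : ℝ :=
  α⁻¹ * ∫ β in Set.Ioo 0 α, VaR μ X β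

namespace QAux
variable (ν : Measure ℝ) [IsProbabilityMeasure ν]

/-- quantile function of a probability measure on ℝ -/
noncomputable def qf (β : ℝ) : ℝ := sInf {s : ℝ | ENNReal.ofReal β ≤ ν (Iic s)}

variable {ν}

lemma qf_nonempty {β : ℝ} (hβ : β < 1) : {s : ℝ | ENNReal.ofReal β ≤ ν (Iic s)}.Nonempty := by
  have h1 : ENNReal.ofReal β < ν univ := by
    rw [measure_univ]; exact ENNReal.ofReal_lt_one.2 hβ
  obtain ⟨x, hx⟩ := ((tendsto_measure_Iic_atTop ν).eventually (eventually_gt_nhds h1)).exists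
  exact ⟨x, hx.le⟩

lemma qf_bddBelow {β : ℝ} (hβ : 0 < β) : BddBelow {s : ℝ | ENNReal.ofReal β ≤ ν (Iic s)} := by
  have hI : (⋂ n : ℕ, Iic (-(n : ℝ))) = ∅ := by
    ext x
    simp only [mem_iInter, mem_Iic, mem_empty_iff_false, iff_false, not_forall]
    obtain ⟨n, hn⟩ := exists_nat_gt (-x)
    exact ⟨n, by push_cast; linarith⟩
  have htend : Filter.Tendsto (fun n : ℕ => ν (Iic (-(n : ℝ)))) Filter.atTop (nhds 0) := by
    have := tendsto_measure_iInter_atTop (μ := ν) (s := fun n : ℕ => Iic (-(n : ℝ)))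
      (fun n => measurableSet_Iic.nullMeasurableSet)
      (fun m n hmn => Iic_subset_Iic.2 (by push_cast; exact neg_le_neg (by exact_mod_cast hmn)))
      ⟨0, measure_ne_top ν _⟩
    rwa [hI, measure_empty] at this
  have h0 : (0 : ENNReal) < ENNReal.ofReal β := ENNReal.ofReal_pos.2 hβ
  obtain ⟨n, hn⟩ := (htend.eventually (eventually_lt_nhds h0)).exists
  refine ⟨-(n : ℝ), fun s hs => ?_⟩
  by_contra h
  push_neg at h
  exact absurd (le_trans hs (measure_mono (Iic_subset_Iic.2 h.le))) (not_le.2 hn)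

lemma qf_mem {β : ℝ} (hβ0 : 0 < β) (hβ1 : β < 1) :
    ENNReal.ofReal β ≤ ν (Iic (qf ν β)) := by
  set a := qf ν β with ha
  have hne := qf_nonempty (ν := ν) hβ1
  have hbdd := qf_bddBelow (ν := ν) hβ0
  have hI : Iic a = ⋂ n : ℕ, Iic (a + 1 / (n + 1)) := by
    ext x
    simp only [mem_Iic, mem_iInter]
    constructor
    · intro h n; have : (0:ℝ) < 1 / (n+1) := by positivity
      linarith
    · intro h
      by_contra hx
      push_neg at hx
      obtain ⟨n, hn⟩ := exists_nat_one_div_lt (sub_pos.2 hx)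
      have := h n
      linarith
  have htend : Filter.Tendsto (fun n : ℕ => ν (Iic (a + 1 / (n + 1)))) Filter.atTop
      (nhds (ν (Iic a))) := by
    rw [hI]
    exact tendsto_measure_iInter_atTop (fun n => measurableSet_Iic.nullMeasurableSet)
      (fun m n hmn => Iic_subset_Iic.2 (by
        have : (1:ℝ) / (n+1) ≤ 1 / (m+1) := by
          apply one_div_le_one_div_of_le (by positivity) (by exact_mod_cast by linarith [hmn])
        linarith))
      ⟨0, measure_ne_top ν _⟩
  refine ge_of_tendsto htend (Filter.Eventually.of_forall fun n => ?_)
  have hpos : (0:ℝ) < 1/(n+1) := by positivity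
  have hlt : a < a + 1 / (n + 1) := by linarith
  obtain ⟨s, hs, hs'⟩ := exists_lt_of_csInf_lt hne hlt
  exact le_trans hs (measure_mono (Iic_subset_Iic.2 hs'.le))

lemma qf_le_iff {β s : ℝ} (hβ0 : 0 < β) (hβ1 : β < 1) :
    qf ν β ≤ s ↔ ENNReal.ofReal β ≤ ν (Iic s) := by
  constructor
  · intro h
    exact le_trans (qf_mem hβ0 hβ1) (measure_mono (Iic_subset_Iic.2 h))
  · intro h
    exact csInf_le (qf_bddBelow hβ0) h

lemma qf_monotoneOn : MonotoneOn (qf ν) (Ioo (0:ℝ) 1) := by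
  intro β hβ β' hβ' hle
  refine csInf_le_csInf (qf_bddBelow hβ.1) (qf_nonempty hβ'.2) ?_
  intro s hs
  exact le_trans (ENNReal.ofReal_le_ofReal hle) hs

lemma qf_aemeasurable : AEMeasurable (qf ν) (volume.restrict (Ioo (0:ℝ) 1)) :=
  aemeasurable_restrict_of_monotoneOn measurableSet_Ioo qf_monotoneOn

lemma qf_map : (volume.restrict (Ioo (0:ℝ) 1)).map (qf ν) = ν := by
  haveI : IsProbabilityMeasure (volume.restrict (Ioo (0:ℝ) 1)) :=
    ⟨by simp [Measure.restrict_apply_univ]⟩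
  haveI : IsProbabilityMeasure ((volume.restrict (Ioo (0:ℝ) 1)).map (qf ν)) :=
    Measure.isProbabilityMeasure_map qf_aemeasurable
  refine Measure.ext_of_Iic _ _ (fun s => ?_)
  rw [Measure.map_apply_of_aemeasurable qf_aemeasurable measurableSet_Iic,
    Measure.restrict_apply' measurableSet_Ioo]
  set r := (ν (Iic s)).toReal with hr
  have hr0 : 0 ≤ r := ENNReal.toReal_nonneg
  have hnetop : ν (Iic s) ≠ ⊤ := measure_ne_top ν _
  have hset : qf ν ⁻¹' Iic s ∩ Ioo 0 1 = Ioo (0:ℝ) 1 ∩ Iic r := by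
    ext β
    simp only [mem_inter_iff, mem_preimage, mem_Iic, mem_Ioo]
    constructor
    · rintro ⟨h1, h2⟩
      exact ⟨h2, by rwa [qf_le_iff h2.1 h2.2, ENNReal.ofReal_le_iff_le_toReal hnetop] at h1⟩
    · rintro ⟨h2, h1⟩
      exact ⟨by rwa [qf_le_iff h2.1 h2.2, ENNReal.ofReal_le_iff_le_toReal hnetop], h2⟩
  rw [hset]
  rcases le_or_gt 1 r with h1 | h1
  · have : Ioo (0:ℝ) 1 ∩ Iic r = Ioo 0 1 := by
      apply inter_eq_left.2
      intro x hx; exact le_trans hx.2.le h1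
    rw [this]
    have hr1 : r ≤ 1 := by
      rw [hr]
      calc (ν (Iic s)).toReal ≤ (ν univ).toReal :=
            ENNReal.toReal_mono (measure_ne_top ν _) (measure_mono (subset_univ _))
        _ = 1 := by simp
    have : r = 1 := le_antisymm hr1 h1
    have hν1 : ν (Iic s) = 1 := by
      rw [← ENNReal.ofReal_toReal hnetop, ← hr, this]; simp
    simp [hν1]
  · have : Ioo (0:ℝ) 1 ∩ Iic r = Ioc 0 r := by
      ext x
      simp only [mem_inter_iff, mem_Ioo, mem_Iic, mem_Ioc]
      constructor
      · rintro ⟨⟨a, b⟩, c⟩; exact ⟨a, c⟩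
      · rintro ⟨a, c⟩; exact ⟨⟨a, lt_of_le_of_lt c h1⟩, c⟩
    rw [this, Real.volume_Ioc, sub_zero, hr, ENNReal.ofReal_toReal hnetop]

end QAux

open QAux

theorem expectation_min_eq_min_left_ES {Ω : Type*} [MeasurableSpace Ω] (μ : Measure Ω)
    [IsProbabilityMeasure μ] (hμ : Atomless μ) (X : Ω → ℝ)
    (hXmeas : Measurable X) (hXint : Integrable X μ) (t : ℝ) :
    IsLeast {y : ℝ | ∃ α ∈ Set.Icc (0 : ℝ) 1, y = α * ESminus μ X α + (1 - α) * t}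
        (∫ ω, min (X ω) t ∂μ) ∧
      {α ∈ Set.Icc (0 : ℝ) 1 | α * ESminus μ X α + (1 - α) * t = ∫ ω, min (X ω) t ∂μ}
        = Set.Icc (μ {ω | X ω < t}).toReal (μ {ω | X ω ≤ t}).toReal := by
  classical
  set ν : Measure ℝ := μ.map X with hν
  haveI : IsProbabilityMeasure ν := Measure.isProbabilityMeasure_map hXmeas.aemeasurable
  set q : ℝ → ℝ := qf ν with hq
  have hVaR : ∀ β, VaR μ X β = q β := by
    intro β
    unfold VaR
    rw [hq]
    unfold qf
    congr 1
    ext s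
    simp only [mem_setOf_eq]
    rw [hν, Measure.map_apply hXmeas measurableSet_Iic]
    rfl
  have hrest : volume.restrict (Ioo (0:ℝ) 1) = volume.restrict (Ioc (0:ℝ) 1) :=
    Measure.restrict_congr_set Ioo_ae_eq_Ioc
  -- integrability of q on (0,1]
  have hid : Integrable (fun x : ℝ => x) ν := by
    rw [hν]
    exact (integrable_map_measure aestronglyMeasurable_id hXmeas.aemeasurable).2 hXint
  have hqintOo : IntegrableOn q (Ioo 0 1) volume := by
    have h : Integrable (id : ℝ → ℝ) ((volume.restrict (Ioo (0:ℝ) 1)).map q) := by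
      rw [hq, qf_map]
      exact hid
    exact (integrable_map_measure aestronglyMeasurable_id qf_aemeasurable).1 h
  have hqintOc : IntegrableOn q (Ioc 0 1) volume := by
    rw [IntegrableOn, ← hrest]; exact hqintOo
  have hqaemOc : AEMeasurable q (volume.restrict (Ioc (0:ℝ) 1)) := by
    rw [← hrest, hq]; exact qf_aemeasurable
  have hminintOc : IntegrableOn (fun β => min (q β) t) (Ioc 0 1) volume := by
    have habs : IntegrableOn (fun _ : ℝ => |t|) (Ioc 0 1) volume :=
      integrableOn_const measure_Ioc_lt_top.ne
    refine Integrable.mono' (hqintOc.abs.add habs)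
      ((hqaemOc.min aemeasurable_const).aestronglyMeasurable) ?_
    · refine Filter.Eventually.of_forall fun β => ?_
      rcases le_total (q β) t with h | h
      · rw [min_eq_left h]
        have := abs_nonneg t
        simp only [Real.norm_eq_abs, Pi.add_apply]
        linarith
      · rw [min_eq_right h]
        have := abs_nonneg (q β)
        simp only [Real.norm_eq_abs, Pi.add_apply]
        linarith
  -- E = quantile integral
  have hE : ∫ ω, min (X ω) t ∂μ = ∫ β in Ioc 0 1, min (q β) t := by
    have h1 : ∫ x, min x t ∂ν = ∫ ω, min (X ω) t ∂μ := by
      rw [hν]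
      exact integral_map hXmeas.aemeasurable
        (measurable_id.min measurable_const).aestronglyMeasurable
    have h2 : ∫ x, min x t ∂ν = ∫ β in Ioo 0 1, min (q β) t := by
      conv_lhs => rw [← qf_map (ν := ν)]
      exact integral_map qf_aemeasurable
        ((measurable_id.min measurable_const).aestronglyMeasurable)
    rw [← h1, h2, setIntegral_congr_set Ioo_ae_eq_Ioc]
  set E := ∫ ω, min (X ω) t ∂μ with hEdef
  -- the two defect integrals
  set I1 : ℝ → ℝ := fun α => ∫ β in Ioc 0 α, (q β - min (q β) t) with hI1
  set I2 : ℝ → ℝ := fun α => ∫ β in Ioc α 1, (t - min (q β) t) with hI2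
  have key : ∀ α ∈ Icc (0:ℝ) 1, α * ESminus μ X α + (1 - α) * t = E + I1 α + I2 α := by
    intro α hα
    have hsub1 : Ioc (0:ℝ) α ⊆ Ioc 0 1 := Ioc_subset_Ioc_right hα.2
    have hsub2 : Ioc α (1:ℝ) ⊆ Ioc 0 1 := Ioc_subset_Ioc_left hα.1
    have hq1 : IntegrableOn q (Ioc 0 α) volume := hqintOc.mono_set hsub1
    have hm1 : IntegrableOn (fun β => min (q β) t) (Ioc 0 α) volume := hminintOc.mono_set hsub1
    have hm2 : IntegrableOn (fun β => min (q β) t) (Ioc α 1) volume := hminintOc.mono_set hsub2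
    have hc2 : IntegrableOn (fun _ : ℝ => t) (Ioc α 1) volume :=
      integrableOn_const measure_Ioc_lt_top.ne
    have hES : α * ESminus μ X α = ∫ β in Ioc 0 α, q β := by
      have hIoo : ∫ β in Set.Ioo 0 α, VaR μ X β = ∫ β in Ioc 0 α, q β := by
        simp only [hVaR]
        exact setIntegral_congr_set Ioo_ae_eq_Ioc
      unfold ESminus
      rcases eq_or_lt_of_le hα.1 with h0 | h0
      · rw [← h0]
        simp
      · rw [hIoo, ← mul_assoc, mul_inv_cancel₀ h0.ne', one_mul]
    have hsplit : ∫ β in Ioc 0 1, min (q β) t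
        = (∫ β in Ioc 0 α, min (q β) t) + ∫ β in Ioc α 1, min (q β) t := by
      rw [← Ioc_union_Ioc_eq_Ioc hα.1 hα.2]
      exact setIntegral_union (Ioc_disjoint_Ioc_of_le le_rfl) measurableSet_Ioc hm1 hm2
    have hconst : (1 - α) * t = ∫ _ in Ioc α 1, t := by
      rw [setIntegral_const, Real.volume_real_Ioc_of_le (by linarith [hα.2]),
        smul_eq_mul]
    have e1 : I1 α = (∫ β in Ioc 0 α, q β) - ∫ β in Ioc 0 α, min (q β) t := by
      rw [hI1]; exact integral_sub hq1 hm1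
    have e2 : I2 α = (∫ _ in Ioc α 1, t) - ∫ β in Ioc α 1, min (q β) t := by
      rw [hI2]; exact integral_sub hc2 hm2
    rw [hES, hE, hsplit, hconst, e1, e2]
    ring
  have hI1nonneg : ∀ α, 0 ≤ I1 α := fun α =>
    setIntegral_nonneg measurableSet_Ioc fun β _ => sub_nonneg.2 (min_le_left _ _)
  have hI2nonneg : ∀ α, 0 ≤ I2 α := fun α =>
    setIntegral_nonneg measurableSet_Ioc fun β _ => sub_nonneg.2 (min_le_right _ _)
  -- boundary quantities
  set R : ℝ := (ν (Iic t)).toReal with hRdef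
  set L : ℝ := (ν (Iio t)).toReal with hLdef
  have hIicne : ν (Iic t) ≠ ⊤ := measure_ne_top ν _
  have hIione : ν (Iio t) ≠ ⊤ := measure_ne_top ν _
  have hR1 : R ≤ 1 := by
    rw [hRdef]
    calc (ν (Iic t)).toReal ≤ (ν univ).toReal :=
        ENNReal.toReal_mono (measure_ne_top ν _) (measure_mono (subset_univ _))
      _ = 1 := by simp
  have hL0 : 0 ≤ L := ENNReal.toReal_nonneg
  have hR0 : 0 ≤ R := ENNReal.toReal_nonneg
  have hLR : L ≤ R := ENNReal.toReal_mono hIicne (measure_mono Iio_subset_Iic_self)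
  have hL1 : L ≤ 1 := le_trans hLR hR1
  have hμR : (μ {ω | X ω ≤ t}).toReal = R := by
    rw [hRdef, hν, Measure.map_apply hXmeas measurableSet_Iic]; rfl
  have hμL : (μ {ω | X ω < t}).toReal = L := by
    rw [hLdef, hν, Measure.map_apply hXmeas measurableSet_Iio]; rfl
  have hae1 : ({(1:ℝ)}ᶜ : Set ℝ) ∈ ae (volume : Measure ℝ) :=
    compl_mem_ae_iff.2 (Real.volume_singleton)
  -- I1 vanishes for α ≤ R
  have hI1zero : ∀ α ∈ Icc (0:ℝ) 1, α ≤ R → I1 α = 0 := by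
    intro α hα hαR
    apply integral_eq_zero_of_ae
    rw [Filter.EventuallyEq, ae_restrict_iff' measurableSet_Ioc]
    filter_upwards [hae1] with β hβ1 hβmem
    have hβ0 : 0 < β := hβmem.1
    have hβlt1 : β < 1 := lt_of_le_of_ne (le_trans hβmem.2 hα.2) hβ1
    have hqt : q β ≤ t := by
      rw [hq, qf_le_iff hβ0 hβlt1, ENNReal.ofReal_le_iff_le_toReal hIicne]
      exact le_trans hβmem.2 hαR
    simp [min_eq_left hqt]
  -- I2 vanishes for α ≥ L
  have hI2zero : ∀ α ∈ Icc (0:ℝ) 1, L ≤ α → I2 α = 0 := by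
    intro α hα hαL
    apply integral_eq_zero_of_ae
    rw [Filter.EventuallyEq, ae_restrict_iff' measurableSet_Ioc]
    filter_upwards [hae1] with β hβ1 hβmem
    have hβ0 : 0 < β := lt_of_le_of_lt hα.1 hβmem.1
    have hβlt1 : β < 1 := lt_of_le_of_ne hβmem.2 hβ1
    have hβL : L < β := lt_of_le_of_lt hαL hβmem.1
    have htq : t ≤ q β := by
      by_contra h
      push_neg at h
      obtain ⟨s, hs, hst⟩ := exists_lt_of_csInf_lt (qf_nonempty (ν := ν) hβlt1) h
      have : ENNReal.ofReal β ≤ ν (Iio t) :=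
        le_trans hs (measure_mono fun x hx => lt_of_le_of_lt hx hst)
      rw [ENNReal.ofReal_le_iff_le_toReal hIione] at this
      exact absurd this (not_le.2 hβL)
    simp [min_eq_right htq]
  -- I1 positive for α > R
  have hI1pos : ∀ α ∈ Icc (0:ℝ) 1, R < α → 0 < I1 α := by
    intro α hα hRα
    have hsub1 : Ioc (0:ℝ) α ⊆ Ioc 0 1 := Ioc_subset_Ioc_right hα.2
    have hint : IntegrableOn (fun β => q β - min (q β) t) (Ioc 0 α) volume :=
      (hqintOc.mono_set hsub1).sub (hminintOc.mono_set hsub1)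
    have hsubRα : Ioo R α ⊆ Ioc 0 α := fun β hβ =>
      ⟨lt_of_le_of_lt hR0 hβ.1, hβ.2.le⟩
    have hposOn : ∀ β ∈ Ioo R α, 0 < q β - min (q β) t := by
      intro β hβ
      have hβ0 : 0 < β := lt_of_le_of_lt hR0 hβ.1
      have hβlt1 : β < 1 := lt_of_lt_of_le hβ.2 hα.2
      have htq : t < q β := by
        by_contra h
        push_neg at h
        rw [hq, qf_le_iff hβ0 hβlt1, ENNReal.ofReal_le_iff_le_toReal hIicne] at h
        exact absurd h (not_le.2 hβ.1)
      rw [min_eq_right htq.le]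
      linarith
    have h2 : 0 < ∫ β in Ioo R α, (q β - min (q β) t) := by
      rw [setIntegral_pos_iff_support_of_nonneg_ae
        (Filter.Eventually.of_forall fun β => sub_nonneg.2 (min_le_left _ _))
        (hint.mono_set hsubRα)]
      refine lt_of_lt_of_le ?_ (measure_mono (fun β hβ =>
        ⟨(hposOn β hβ).ne', hβ⟩ : Ioo R α ⊆ Function.support _ ∩ Ioo R α))
      rw [Real.volume_Ioo]
      exact ENNReal.ofReal_pos.2 (by linarith)
    refine lt_of_lt_of_le h2 ?_
    exact setIntegral_mono_set hint
      (Filter.Eventually.of_forall fun β => sub_nonneg.2 (min_le_left _ _))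
      (HasSubset.Subset.eventuallyLE hsubRα)
  -- I2 positive for α < L
  have hI2pos : ∀ α ∈ Icc (0:ℝ) 1, α < L → 0 < I2 α := by
    intro α hα hαL
    have hsub2 : Ioc α (1:ℝ) ⊆ Ioc 0 1 := Ioc_subset_Ioc_left hα.1
    have hc2 : IntegrableOn (fun _ : ℝ => t) (Ioc α 1) volume :=
      integrableOn_const measure_Ioc_lt_top.ne
    have hint : IntegrableOn (fun β => t - min (q β) t) (Ioc α 1) volume :=
      hc2.sub (hminintOc.mono_set hsub2)
    have hsubαL : Ioo α L ⊆ Ioc α 1 := fun β hβ => ⟨hβ.1, le_trans hβ.2.le hL1⟩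
    have hposOn : ∀ β ∈ Ioo α L, 0 < t - min (q β) t := by
      intro β hβ
      have hβ0 : 0 < β := lt_of_le_of_lt hα.1 hβ.1
      have hβlt1 : β < 1 := lt_of_lt_of_le hβ.2 hL1
      have hβL : ENNReal.ofReal β < ν (Iio t) :=
        (ENNReal.ofReal_lt_iff_lt_toReal hβ0.le hIione).2 hβ.2
      have hIio : Iio t = ⋃ n : ℕ, Iic (t - 1 / (n + 1)) := by
        ext x
        simp only [mem_Iio, mem_iUnion, mem_Iic]
        constructor
        · intro h
          obtain ⟨n, hn⟩ := exists_nat_one_div_lt (sub_pos.2 h)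
          exact ⟨n, by push_cast at hn ⊢; linarith⟩
        · rintro ⟨n, hn⟩
          have : (0:ℝ) < 1 / (n + 1) := by positivity
          linarith
      have htend : Filter.Tendsto (fun n : ℕ => ν (Iic (t - 1 / (n + 1)))) Filter.atTop
          (nhds (ν (Iio t))) := by
        rw [hIio]
        exact tendsto_measure_iUnion_atTop (fun m n hmn => Iic_subset_Iic.2 (by
          have h1 : (1:ℝ) / (n+1) ≤ 1 / (m+1) :=
            one_div_le_one_div_of_le (by positivity) (by exact_mod_cast by linarith [hmn])
          linarith))
      obtain ⟨n, hn⟩ := (htend.eventually (eventually_gt_nhds hβL)).exists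
      have hqβ : q β ≤ t - 1 / (n + 1) := by
        rw [hq]
        exact csInf_le (qf_bddBelow (ν := ν) hβ0) hn.le
      have hpos : (0:ℝ) < 1 / (n + 1) := by positivity
      have hqt : q β < t := by linarith
      rw [min_eq_left hqt.le]
      linarith
    have h2 : 0 < ∫ β in Ioo α L, (t - min (q β) t) := by
      rw [setIntegral_pos_iff_support_of_nonneg_ae
        (Filter.Eventually.of_forall fun β => sub_nonneg.2 (min_le_right _ _))
        (hint.mono_set hsubαL)]
      refine lt_of_lt_of_le ?_ (measure_mono (fun β hβ =>
        ⟨(hposOn β hβ).ne', hβ⟩ : Ioo α L ⊆ Function.support _ ∩ Ioo α L))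
      rw [Real.volume_Ioo]
      exact ENNReal.ofReal_pos.2 (by linarith)
    refine lt_of_lt_of_le h2 ?_
    exact setIntegral_mono_set hint
      (Filter.Eventually.of_forall fun β => sub_nonneg.2 (min_le_right _ _))
      (HasSubset.Subset.eventuallyLE hsubαL)
  -- assemble
  constructor
  · constructor
    · refine ⟨R, ⟨hR0, hR1⟩, ?_⟩
      rw [key R ⟨hR0, hR1⟩, hI1zero R ⟨hR0, hR1⟩ le_rfl, hI2zero R ⟨hR0, hR1⟩ hLR]
      ring
    · rintro y ⟨α, hα, rfl⟩
      rw [key α hα]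
      have := hI1nonneg α
      have := hI2nonneg α
      linarith
  · ext α
    simp only [mem_setOf_eq, mem_Icc, hμL, hμR]
    constructor
    · rintro ⟨hα, heq⟩
      rw [key α hα] at heq
      have h1 := hI1nonneg α
      have h2 := hI2nonneg α
      have hz1 : I1 α = 0 := by linarith
      have hz2 : I2 α = 0 := by linarith
      constructor
      · by_contra h
        push_neg at h
        exact absurd hz2 (ne_of_gt (hI2pos α hα h))
      · by_contra h
        push_neg at h
        exact absurd hz1 (ne_of_gt (hI1pos α hα h))
    · rintro ⟨hL', hR'⟩
      have hα : α ∈ Icc (0:ℝ) 1 := ⟨le_trans hL0 hL', le_trans hR' hR1⟩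
      refine ⟨hα, ?_⟩
      rw [key α hα, hI1zero α hα hR', hI2zero α hα hL']
      ring
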